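/- arXiv:0905.2850 — 4 statements merged into one kernel-verified Lean document; each statement's English description precedes it below -/
import Mathlib

section
/- Let q be a real number with 0 < |q| < 1. Then (1 - q²) · ((1 - √(1 - q²))² + q²(1 - √(1 - q⁴))² + Σ_{n≥2} q^{2n}(2 - q^{2n+2})) ≤ 9 q⁴. -/
theorem stmt_2 (q : ℝ) (h0 : 0 < |q|) (h1 : |q| < 1) :
    (1 - q ^ 2) *
      ((1 - Real.sqrt (1 - q ^ 2)) ^ 2 + q ^ 2 * (1 - Real.sqrt (1 - q ^ 4)) ^ 2 +
        ∑' n : ℕ, q ^ (2 * (n + 2)) * (2 - q ^ (2 * (n + 2) + 2)))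
      ≤ 9 * q ^ 4 := by
  have hq0 : q ≠ 0 := by intro h; simp [h] at h0
  have ht0 : 0 < q ^ 2 := by positivity
  have ht1 : q ^ 2 < 1 := by
    have h := sq_abs q
    nlinarith [abs_nonneg q]
  set t : ℝ := q ^ 2 with htdef
  -- sqrt bounds
  have hub1 : (1 - t) ≤ Real.sqrt (1 - t) := by
    rw [Real.le_sqrt (by linarith) (by linarith)]
    nlinarith
  have hlb1 : Real.sqrt (1 - t) ≤ 1 := by
    rw [Real.sqrt_le_one]; linarith
  have hq4 : q ^ 4 = t ^ 2 := by ring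
  have ht2lt : t ^ 2 < 1 := by nlinarith
  have hub2 : (1 - t ^ 2) ≤ Real.sqrt (1 - q ^ 4) := by
    rw [hq4, Real.le_sqrt (by nlinarith) (by nlinarith)]
    nlinarith
  have hlb2 : Real.sqrt (1 - q ^ 4) ≤ 1 := by
    rw [Real.sqrt_le_one]; nlinarith
  have hA : (1 - Real.sqrt (1 - t)) ^ 2 ≤ t ^ 2 := by nlinarith
  have hB : (1 - Real.sqrt (1 - q ^ 4)) ^ 2 ≤ (t ^ 2) ^ 2 := by nlinarith
  have hAnn : 0 ≤ (1 - Real.sqrt (1 - t)) ^ 2 := sq_nonneg _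
  have hBnn : 0 ≤ (1 - Real.sqrt (1 - q ^ 4)) ^ 2 := sq_nonneg _
  -- tsum bound
  have hgeo : Summable (fun n : ℕ => t ^ n) := summable_geometric_of_lt_one (le_of_lt ht0) ht1
  have hSummR : Summable (fun n : ℕ => 2 * t ^ 2 * t ^ n) := hgeo.mul_left _
  have hterm_eq : ∀ n : ℕ, q ^ (2 * (n + 2)) * (2 - q ^ (2 * (n + 2) + 2))
      = t ^ 2 * t ^ n * (2 - t ^ 2 * t ^ (n + 1)) := by
    intro n
    rw [htdef]
    ring
  have htpow_le_one : ∀ m : ℕ, t ^ m ≤ 1 := fun m =>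
    pow_le_one₀ (le_of_lt ht0) (le_of_lt ht1)
  have htpow_nn : ∀ m : ℕ, (0:ℝ) ≤ t ^ m := fun m => pow_nonneg (le_of_lt ht0) m
  have hterm_nonneg : ∀ n : ℕ, 0 ≤ q ^ (2 * (n + 2)) * (2 - q ^ (2 * (n + 2) + 2)) := by
    intro n
    rw [hterm_eq n]
    have hx : t ^ 2 * t ^ (n + 1) ≤ 1 :=
      mul_le_one₀ (htpow_le_one 2) (htpow_nn (n + 1)) (htpow_le_one (n + 1))
    have h2 := htpow_nn n
    have := mul_nonneg (mul_nonneg (htpow_nn 2) h2) (by linarith : (0:ℝ) ≤ 2 - t ^ 2 * t ^ (n + 1))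
    linarith
  have hterm_le : ∀ n : ℕ, q ^ (2 * (n + 2)) * (2 - q ^ (2 * (n + 2) + 2)) ≤ 2 * t ^ 2 * t ^ n := by
    intro n
    rw [hterm_eq n]
    have hx : 0 ≤ t ^ 2 * t ^ n * (t ^ 2 * t ^ (n + 1)) :=
      mul_nonneg (mul_nonneg (htpow_nn 2) (htpow_nn n)) (mul_nonneg (htpow_nn 2) (htpow_nn (n + 1)))
    nlinarith
  have hSummL : Summable (fun n : ℕ => q ^ (2 * (n + 2)) * (2 - q ^ (2 * (n + 2) + 2))) :=
    Summable.of_nonneg_of_le hterm_nonneg hterm_le hSummR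
  have hS : ∑' n : ℕ, q ^ (2 * (n + 2)) * (2 - q ^ (2 * (n + 2) + 2))
      ≤ 2 * t ^ 2 * (1 - t)⁻¹ := by
    calc ∑' n : ℕ, q ^ (2 * (n + 2)) * (2 - q ^ (2 * (n + 2) + 2))
        ≤ ∑' n : ℕ, 2 * t ^ 2 * t ^ n := Summable.tsum_le_tsum hterm_le hSummL hSummR
      _ = 2 * t ^ 2 * (1 - t)⁻¹ := by
          rw [tsum_mul_left, tsum_geometric_of_lt_one (le_of_lt ht0) ht1]
  have hSnn : 0 ≤ ∑' n : ℕ, q ^ (2 * (n + 2)) * (2 - q ^ (2 * (n + 2) + 2)) :=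
    tsum_nonneg hterm_nonneg
  have h1t : 0 < 1 - t := by linarith
  have hS' : (1 - t) * (∑' n : ℕ, q ^ (2 * (n + 2)) * (2 - q ^ (2 * (n + 2) + 2))) ≤ 2 * t ^ 2 := by
    have := mul_le_mul_of_nonneg_left hS (le_of_lt h1t)
    calc (1 - t) * (∑' n : ℕ, q ^ (2 * (n + 2)) * (2 - q ^ (2 * (n + 2) + 2)))
        ≤ (1 - t) * (2 * t ^ 2 * (1 - t)⁻¹) := this
      _ = 2 * t ^ 2 := by field_simp
  have hBt : t * (1 - Real.sqrt (1 - q ^ 4)) ^ 2 ≤ t * (t ^ 2) ^ 2 :=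
    mul_le_mul_of_nonneg_left hB (le_of_lt ht0)
  nlinarith [hS', mul_le_mul_of_nonneg_left hA (le_of_lt h1t),
    mul_le_mul_of_nonneg_left hBt (le_of_lt h1t), hq4,
    mul_nonneg (le_of_lt ht0) (sq_nonneg t), sq_nonneg t, sq_nonneg (t ^ 2),
    mul_nonneg (mul_nonneg (le_of_lt ht0) (le_of_lt ht0)) (sq_nonneg t),
    mul_nonneg (le_of_lt ht0) (mul_nonneg (le_of_lt ht0) (sq_nonneg (t ^ 2)))]
end

section
/- Let (H_n, ξ_n) be a sequence of Hilbert spaces with distinguished unit vectors, and let η_n ∈ H_n be nonzero vectors with ‖η_n‖ ≤ 1 such that Σ_n |1 - ⟨η_n, ξ_n⟩| < ∞. Then the sequence of vectors (η_1 ⊗ ⋯ ⊗ η_n ⊗ ξ_{n+1} ⊗ ξ_{n+2} ⊗ ⋯) in the infinite tensor product Hilbert space ⊗_{n}(H_n, ξ_n) converges in norm to a nonzero vector. -/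
open scoped InnerProductSpace

private lemma norm_one_sub_prod_le {𝕜 : Type*} [NormedField 𝕜] (c : ℕ → 𝕜) (s : Finset ℕ)
    (hc : ∀ k, ‖c k‖ ≤ 1) : ‖1 - ∏ k ∈ s, c k‖ ≤ ∑ k ∈ s, ‖1 - c k‖ := by
  classical
  induction s using Finset.induction_on with
  | empty => simp
  | @insert a s ha ih =>
    rw [Finset.prod_insert ha, Finset.sum_insert ha]
    have h1 : (1 : 𝕜) - c a * ∏ k ∈ s, c k = (1 - c a) + c a * (1 - ∏ k ∈ s, c k) := by ring
    rw [h1]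
    calc ‖(1 - c a) + c a * (1 - ∏ k ∈ s, c k)‖
        ≤ ‖1 - c a‖ + ‖c a * (1 - ∏ k ∈ s, c k)‖ := norm_add_le _ _
      _ = ‖1 - c a‖ + ‖c a‖ * ‖1 - ∏ k ∈ s, c k‖ := by rw [norm_mul]
      _ ≤ ‖1 - c a‖ + 1 * ∑ k ∈ s, ‖1 - c k‖ := by
          gcongr
          exact hc a
      _ = ‖1 - c a‖ + ∑ k ∈ s, ‖1 - c k‖ := by ring

/-- Infinite tensor product of pointed Hilbert spaces, encoded via the inner
products of the partial tensor vectors `v n = η 0 ⊗ ⋯ ⊗ η n ⊗ ξ (n+1) ⊗ ⋯`. -/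
theorem stmt_5
    {ι : ℕ → Type*} [∀ n, NormedAddCommGroup (ι n)] [∀ n, InnerProductSpace ℂ (ι n)]
    (ξ : ∀ n, ι n) (hξ : ∀ n, ‖ξ n‖ = 1)
    (η : ∀ n, ι n) (hη0 : ∀ n, η n ≠ 0) (hη1 : ∀ n, ‖η n‖ ≤ 1)
    (hsum : Summable fun n => ‖(1 : ℂ) - ⟪η n, ξ n⟫_ℂ‖)
    {K : Type*} [NormedAddCommGroup K] [InnerProductSpace ℂ K] [CompleteSpace K]
    (v : ℕ → K)
    (hv : ∀ m n : ℕ, m ≤ n →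
      ⟪v n, v m⟫_ℂ =
        (∏ k ∈ Finset.range (m + 1), ⟪η k, η k⟫_ℂ) *
          ∏ k ∈ Finset.Ico (m + 1) (n + 1), ⟪η k, ξ k⟫_ℂ) :
    ∃ L : K, L ≠ 0 ∧ Filter.Tendsto v Filter.atTop (nhds L) := by
  classical
  set a : ℕ → ℂ := fun k => ⟪η k, ξ k⟫_ℂ with ha_def
  set f : ℕ → ℝ := fun k => ‖(1 : ℂ) - a k‖ with hf_def
  set b : ℕ → ℝ := fun k => ‖η k‖ ^ 2 with hb_def
  set p : ℕ → ℝ := fun n => ∏ k ∈ Finset.range (n + 1), b k with hp_def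
  have hb0 : ∀ k, 0 < b k := fun k =>
    pow_pos (norm_pos_iff.2 (hη0 k)) 2
  have hb1 : ∀ k, b k ≤ 1 := fun k =>
    pow_le_one₀ (norm_nonneg _) (hη1 k)
  have ha1 : ∀ k, ‖a k‖ ≤ ‖η k‖ := by
    intro k
    have := norm_inner_le_norm (𝕜 := ℂ) (η k) (ξ k)
    simpa [ha_def, hξ k] using this
  have ha1' : ∀ k, ‖a k‖ ≤ 1 := fun k => (ha1 k).trans (hη1 k)
  have hf0 : ∀ k, 0 ≤ f k := fun k => norm_nonneg _
  have hbf : ∀ k, 1 - b k ≤ 2 * f k := by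
    intro k
    have h1 : 1 - ‖a k‖ ≤ f k := by
      have := norm_sub_norm_le (1 : ℂ) (a k)
      simpa [hf_def] using this
    have h2 : ‖a k‖ ≤ ‖η k‖ := ha1 k
    have h3 : ‖η k‖ ≤ 1 := hη1 k
    have h4 : 0 ≤ ‖η k‖ := norm_nonneg _
    simp only [hb_def]
    nlinarith
  -- norms of v n
  have hpC : ∀ n, (∏ k ∈ Finset.range (n + 1), ⟪η k, η k⟫_ℂ) = ((p n : ℝ) : ℂ) := by
    intro n
    rw [hp_def]
    push_cast
    refine Finset.prod_congr rfl fun k _ => ?_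
    rw [inner_self_eq_norm_sq_to_K]
    norm_cast
  have hnorm_sq : ∀ n, ‖v n‖ ^ 2 = p n := by
    intro n
    have h := hv n n le_rfl
    rw [Finset.Ico_self, Finset.prod_empty, mul_one, hpC,
      inner_self_eq_norm_sq_to_K] at h
    have h2 : ((‖v n‖ ^ 2 : ℝ) : ℂ) = ((p n : ℝ) : ℂ) := by push_cast; exact h
    exact_mod_cast h2
  have hp0 : ∀ n, 0 < p n := fun n => Finset.prod_pos fun k _ => hb0 k
  have hp1 : ∀ n, p n ≤ 1 := fun n =>
    Finset.prod_le_one (fun k _ => (hb0 k).le) fun k _ => hb1 k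
  have hp_mono : ∀ m n, m ≤ n → p n ≤ p m := by
    intro m n h
    have hsplit : p m * ∏ k ∈ Finset.Ico (m + 1) (n + 1), b k = p n := by
      rw [hp_def]
      exact Finset.prod_range_mul_prod_Ico b (by omega)
    rw [← hsplit]
    have h2 : ∏ k ∈ Finset.Ico (m + 1) (n + 1), b k ≤ 1 :=
      Finset.prod_le_one (fun k _ => (hb0 k).le) fun k _ => hb1 k
    have h3 : 0 ≤ ∏ k ∈ Finset.Ico (m + 1) (n + 1), b k :=
      Finset.prod_nonneg fun k _ => (hb0 k).le
    nlinarith [hp0 m]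
  -- key estimate
  have key : ∀ m n, m ≤ n →
      ‖v n - v m‖ ^ 2 ≤ 2 * ∑ k ∈ Finset.Ico (m + 1) (n + 1), f k := by
    intro m n h
    set Q : ℂ := ∏ k ∈ Finset.Ico (m + 1) (n + 1), a k with hQ_def
    have hQ1 : ‖Q‖ ≤ 1 := by
      rw [hQ_def, norm_prod]
      exact Finset.prod_le_one (fun k _ => norm_nonneg _) fun k _ => ha1' k
    have hQre : Q.re ≤ 1 := (Complex.re_le_norm Q).trans hQ1
    have hQsum : 1 - Q.re ≤ ∑ k ∈ Finset.Ico (m + 1) (n + 1), f k := by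
      have h1 : (1 : ℝ) - Q.re ≤ ‖(1 : ℂ) - Q‖ := by
        have := Complex.re_le_norm ((1 : ℂ) - Q)
        simpa [Complex.sub_re, Complex.one_re] using this
      exact h1.trans (norm_one_sub_prod_le a _ ha1')
    have hinner : RCLike.re ⟪v n, v m⟫_ℂ = p m * Q.re := by
      rw [hv m n h, hpC]
      simp [RCLike.re_to_complex, Complex.mul_re, hQ_def]
    have hns := norm_sub_sq (𝕜 := ℂ) (v n) (v m)
    rw [hnorm_sq n, hnorm_sq m, hinner] at hns
    have h1 : p n ≤ p m := hp_mono m n h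
    have h2 : 0 < p m := hp0 m
    have h3 : p m ≤ 1 := hp1 m
    nlinarith [hQsum, hQre]
  -- tail sums
  set t : ℕ → ℝ := fun m => ∑' k, f (k + (m + 1)) with ht_def
  have ht_nonneg : ∀ m, 0 ≤ t m := fun m => tsum_nonneg fun k => hf0 _
  have ht_bound : ∀ m n, ∑ k ∈ Finset.Ico (m + 1) (n + 1), f k ≤ t m := by
    intro m n
    rw [Finset.sum_Ico_eq_sum_range, ht_def]
    have hsummable : Summable fun k => f (k + (m + 1)) :=
      (summable_nat_add_iff (m + 1)).2 hsum
    have := Summable.sum_le_tsum (Finset.range (n + 1 - (m + 1)))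
      (fun k _ => hf0 _) hsummable
    refine le_trans (le_of_eq ?_) this
    refine Finset.sum_congr rfl fun k _ => ?_
    simp [add_comm]
  have ht0 : Filter.Tendsto t Filter.atTop (nhds 0) := by
    have h1 : Filter.Tendsto (fun i => ∑' k, f (k + i)) Filter.atTop (nhds 0) :=
      tendsto_sum_nat_add f
    exact h1.comp (Filter.tendsto_add_atTop_nat 1)
  -- Cauchy
  have hcauchy : CauchySeq v := by
    rw [Metric.cauchySeq_iff']
    intro ε hε
    have hε2 : (0 : ℝ) < ε ^ 2 / 2 := by positivity
    obtain ⟨N, hN⟩ := (Filter.tendsto_atTop'.1 ht0 (Set.Iio (ε ^ 2 / 2))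
      (Iio_mem_nhds hε2))
    refine ⟨N, fun n hn => ?_⟩
    have hkey := key N n hn
    have htN : t N < ε ^ 2 / 2 := hN N le_rfl
    have h1 : ‖v n - v N‖ ^ 2 < ε ^ 2 := by
      have := ht_bound N n
      nlinarith
    rw [dist_eq_norm]
    exact lt_of_pow_lt_pow_left₀ 2 hε.le h1
  obtain ⟨L, hL⟩ := cauchySeq_tendsto_of_complete hcauchy
  -- find m1 with small tail, giving uniform lower bound on p
  obtain ⟨m1, hm1⟩ : ∃ m1, t m1 < 1 / 4 := by
    obtain ⟨m1, hm1⟩ := (Filter.tendsto_atTop'.1 ht0 (Set.Iio (1 / 4))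
      (Iio_mem_nhds (by norm_num)))
    exact ⟨m1, hm1 m1 le_rfl⟩
  have hp_lower : ∀ m, m1 ≤ m → p m1 / 2 ≤ p m := by
    intro m hm
    have hsplit : p m1 * ∏ k ∈ Finset.Ico (m1 + 1) (m + 1), b k = p m := by
      rw [hp_def]
      exact Finset.prod_range_mul_prod_Ico b (by omega)
    have hprod : (1 : ℝ) / 2 ≤ ∏ k ∈ Finset.Ico (m1 + 1) (m + 1), b k := by
      have h1 : ‖(1 : ℝ) - ∏ k ∈ Finset.Ico (m1 + 1) (m + 1), b k‖ ≤
          ∑ k ∈ Finset.Ico (m1 + 1) (m + 1), ‖(1 : ℝ) - b k‖ := by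
        refine norm_one_sub_prod_le b _ fun k => ?_
        rw [Real.norm_eq_abs, abs_of_nonneg (hb0 k).le]
        exact hb1 k
      have h2 : ∑ k ∈ Finset.Ico (m1 + 1) (m + 1), ‖(1 : ℝ) - b k‖ ≤ 2 * t m1 := by
        calc ∑ k ∈ Finset.Ico (m1 + 1) (m + 1), ‖(1 : ℝ) - b k‖
            ≤ ∑ k ∈ Finset.Ico (m1 + 1) (m + 1), 2 * f k := by
              refine Finset.sum_le_sum fun k _ => ?_
              rw [Real.norm_eq_abs, abs_of_nonneg (by linarith [hb1 k])]
              exact hbf k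
          _ = 2 * ∑ k ∈ Finset.Ico (m1 + 1) (m + 1), f k := by
              rw [Finset.mul_sum]
          _ ≤ 2 * t m1 := by linarith [ht_bound m1 m]
      have h3 : (1 : ℝ) - ∏ k ∈ Finset.Ico (m1 + 1) (m + 1), b k ≤ 2 * t m1 :=
        (le_abs_self _).trans ((Real.norm_eq_abs _ ▸ h1).trans h2)
      linarith
    nlinarith [hp0 m1, hprod, hsplit]
  -- choose m0
  obtain ⟨m0, hm0t, hm0ge⟩ : ∃ m0, t m0 < p m1 / 4 ∧ m1 ≤ m0 := by
    obtain ⟨N2, hN2⟩ := Filter.tendsto_atTop'.1 ht0 (Set.Iio (p m1 / 4))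
      (Iio_mem_nhds (by linarith [hp0 m1]))
    exact ⟨max N2 m1, hN2 _ (le_max_left _ _), le_max_right _ _⟩
  have hLle : ‖L - v m0‖ ^ 2 ≤ 2 * t m0 := by
    have hten : Filter.Tendsto (fun n => ‖v n - v m0‖ ^ 2) Filter.atTop
        (nhds (‖L - v m0‖ ^ 2)) := by
      exact ((hL.sub_const (v m0)).norm.pow 2)
    refine le_of_tendsto hten ?_
    filter_upwards [Filter.eventually_ge_atTop m0] with n hn
    exact (key m0 n hn).trans (by linarith [ht_bound m0 n])
  have hfinal : ‖L - v m0‖ ^ 2 < ‖v m0‖ ^ 2 := by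
    rw [hnorm_sq m0]
    have := hp_lower m0 hm0ge
    linarith
  refine ⟨L, ?_, hL⟩
  intro hL0
  rw [hL0, zero_sub, norm_neg] at hfinal
  exact lt_irrefl _ hfinal
end

section
/- Let 0 < |q| < 1. In the representation of Proposition (π(a)ξ_{n,k} = √(1-q^{2n})ξ_{n-1,k}), the operator (w-a)(w-a)* has diagonal entries (1-√(1-q²))², (1-√(1-q⁴))², and 2-q^{2n+2} for n ≥ 2, with respect to the basis ξ_{n,0}, in the sense that ⟨(w-a)(w-a)* ξ_{n,0}, ξ_{n,0}⟩ equals these values. -/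
open scoped InnerProductSpace
open ContinuousLinearMap

theorem stmt_13 (q : ℝ) (h0 : 0 < |q|) (h1 : |q| < 1)
    {H : Type*} [NormedAddCommGroup H] [InnerProductSpace ℂ H] [CompleteSpace H]
    (ξ : HilbertBasis (ℕ × ℤ) ℂ H)
    (τ : ℕ → ℕ)
    (hτ : τ 0 = 2 ∧ τ 1 = 0 ∧ τ 2 = 1 ∧ ∀ n, 3 ≤ n → τ n = n)
    (a w : H →L[ℂ] H)
    (ha0 : ∀ k : ℤ, a (ξ (0, k)) = 0)
    (ha : ∀ (n : ℕ) (k : ℤ),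
      a (ξ (n + 1, k)) = (Real.sqrt (1 - q ^ (2 * (n + 1))) : ℂ) • ξ (n, k))
    (hw : ∀ (n : ℕ) (k : ℤ), w (ξ (n, k)) = ξ (τ n, k)) :
    ⟪((w - a) ∘L adjoint (w - a)) (ξ (0, 0)), ξ (0, 0)⟫_ℂ
      = (((1 - Real.sqrt (1 - q ^ 2)) ^ 2 : ℝ) : ℂ) ∧
    ⟪((w - a) ∘L adjoint (w - a)) (ξ (1, 0)), ξ (1, 0)⟫_ℂ
      = (((1 - Real.sqrt (1 - q ^ 4)) ^ 2 : ℝ) : ℂ) ∧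
    ∀ n : ℕ, 2 ≤ n →
      ⟪((w - a) ∘L adjoint (w - a)) (ξ (n, 0)), ξ (n, 0)⟫_ℂ
        = (((2 - q ^ (2 * n + 2)) : ℝ) : ℂ) := by
  obtain ⟨hτ0, hτ1, hτ2, hτ3⟩ := hτ
  have hone : ∀ i j : ℕ × ℤ, ⟪ξ i, ξ j⟫_ℂ = if i = j then 1 else 0 :=
    orthonormal_iff_ite.mp ξ.orthonormal
  have hext : ∀ x y : H, (∀ i, ⟪ξ i, x⟫_ℂ = ⟪ξ i, y⟫_ℂ) → x = y := by
    intro x y h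
    apply ξ.repr.injective
    ext i
    rw [ξ.repr_apply_apply, ξ.repr_apply_apply, h]
  set c : ℕ → ℝ := fun m => Real.sqrt (1 - q ^ (2 * m)) with hc
  have hc0 : c 0 = 0 := by simp [hc]
  have hq1 : ∀ m : ℕ, q ^ (2 * m) ≤ 1 := by
    intro m
    calc q ^ (2 * m) = (q ^ m) ^ 2 := by ring
      _ = (|q| ^ m) ^ 2 := by rw [← abs_pow, sq_abs]
      _ ≤ 1 ^ 2 := by
          have h := pow_le_one₀ (abs_nonneg q) h1.le (n := m)
          nlinarith [pow_nonneg (abs_nonneg q) m]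
      _ = 1 := one_pow 2
  have hcsq : ∀ m : ℕ, (c m) ^ 2 = 1 - q ^ (2 * m) := by
    intro m
    exact Real.sq_sqrt (by linarith [hq1 m])
  have haC : ∀ (m : ℕ) (k : ℤ), a (ξ (m, k)) = ((c m : ℝ) : ℂ) • ξ (m - 1, k) := by
    intro m k
    cases m with
    | zero => simp [ha0, hc0]
    | succ j => simpa [hc] using ha j k
  have hinner : ∀ (m : ℕ) (k : ℤ) (n : ℕ),
      ⟪(w - a) (ξ (m, k)), ξ (n, (0 : ℤ))⟫_ℂ
        = (if (τ m, k) = ((n : ℕ), (0 : ℤ)) then 1 else 0)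
          - ((c m : ℝ) : ℂ) * (if (m - 1, k) = ((n : ℕ), (0 : ℤ)) then 1 else 0) := by
    intro m k n
    rw [ContinuousLinearMap.sub_apply, hw, haC, inner_sub_left, inner_smul_left,
      hone, hone]
    simp [Complex.conj_ofReal]
  have hadj : ∀ n p : ℕ, (∀ m, τ m = n ↔ m = p) →
      adjoint (w - a) (ξ (n, (0 : ℤ)))
        = ξ (p, (0 : ℤ)) - ((c (n + 1) : ℝ) : ℂ) • ξ (n + 1, (0 : ℤ)) := by
    intro n p hp
    apply hext
    rintro ⟨m, k⟩
    rw [ContinuousLinearMap.adjoint_inner_right, hinner, inner_sub_right,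
      inner_smul_right, hone, hone]
    by_cases hk : k = 0
    · subst hk
      have e1 : ((τ m, (0 : ℤ)) = ((n : ℕ), (0 : ℤ)))
          ↔ (((m : ℕ), (0 : ℤ)) = ((p : ℕ), (0 : ℤ))) := by
        simp [hp m]
      rw [if_congr e1 rfl rfl]
      by_cases hm : m = n + 1
      · subst hm; simp
      · have e2 : ¬ (((m : ℕ), (0 : ℤ)) = ((n + 1 : ℕ), (0 : ℤ))) := by simp [hm]
        rw [if_neg e2, mul_zero]
        by_cases hm1 : ((m - 1 : ℕ), (0 : ℤ)) = ((n : ℕ), (0 : ℤ))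
        · have hm0 : m = 0 := by
            simp only [Prod.mk.injEq] at hm1
            omega
          subst hm0
          rw [if_pos hm1, hc0]
          simp
        · rw [if_neg hm1, mul_zero]
    · simp [Prod.ext_iff, hk]
  refine ⟨?_, ?_, ?_⟩
  · rw [comp_apply, hadj 0 1 ?_, map_sub, ContinuousLinearMap.map_smul,
      inner_sub_left, inner_smul_left, hinner]
    · have hc1 : c 1 = Real.sqrt (1 - q ^ 2) := by norm_num [hc]
      norm_num [hτ1, Complex.conj_ofReal, hc1]
      ring
    · intro m
      match m with
      | 0 => simp [hτ0]
      | 1 => simp [hτ1]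
      | 2 => simp [hτ2]
      | (m + 3) => rw [hτ3 (m + 3) (by omega)]; omega
  · rw [comp_apply, hadj 1 2 ?_, map_sub, ContinuousLinearMap.map_smul,
      inner_sub_left, inner_smul_left, hinner]
    · have hc2 : c 2 = Real.sqrt (1 - q ^ 4) := by norm_num [hc]
      norm_num [hτ2, Complex.conj_ofReal, hc2]
      ring
    · intro m
      match m with
      | 0 => simp [hτ0]
      | 1 => simp [hτ1]
      | 2 => simp [hτ2]
      | (m + 3) => rw [hτ3 (m + 3) (by omega)]; omega
  · intro n hn
    obtain h2 | h3 : n = 2 ∨ 3 ≤ n := by omega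
    · subst h2
      rw [comp_apply, hadj 2 0 ?_, map_sub, ContinuousLinearMap.map_smul,
        inner_sub_left, inner_smul_left, hinner, hinner]
      · have hsq := hcsq 3
        have hcc : ((c 3 : ℝ) : ℂ) ^ 2 = 1 - (q : ℂ) ^ 6 := by
          rw [← Complex.ofReal_pow, hsq]; push_cast; norm_num
        simp only [hτ0, hτ3 3 (by omega), hc0, Complex.conj_ofReal]
        norm_num
        linear_combination hcc
      · intro m
        match m with
        | 0 => simp [hτ0]
        | 1 => simp [hτ1]
        | 2 => simp [hτ2]
        | (m + 3) => rw [hτ3 (m + 3) (by omega)]; omega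
    · rw [comp_apply, hadj n n ?_, map_sub, ContinuousLinearMap.map_smul,
        inner_sub_left, inner_smul_left, hinner, hinner]
      · have hsq := hcsq (n + 1)
        have hτn : τ n = n := hτ3 n h3
        have hτn1 : τ (n + 1) = n + 1 := hτ3 (n + 1) (by omega)
        have e1 : ((τ n, (0 : ℤ)) = ((n : ℕ), (0 : ℤ))) := by simp [hτn]
        have e2 : ¬ ((n - 1, (0 : ℤ)) = ((n : ℕ), (0 : ℤ))) := by
          simp only [Prod.mk.injEq]; omega
        have e3 : ¬ ((τ (n + 1), (0 : ℤ)) = ((n : ℕ), (0 : ℤ))) := by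
          simp only [Prod.mk.injEq, hτn1]; omega
        have e4 : ((n + 1 - 1, (0 : ℤ)) = ((n : ℕ), (0 : ℤ))) := by simp
        rw [if_pos e1, if_neg e2, if_pos e4, if_neg e3, Complex.conj_ofReal]
        have hcc : ((c (n + 1) : ℝ) : ℂ) * ((c (n + 1) : ℝ) : ℂ)
            = 1 - (q : ℂ) ^ (2 * n + 2) := by
          rw [← Complex.ofReal_mul, ← sq, hsq]
          rw [show 2 * (n + 1) = 2 * n + 2 from by ring]
          push_cast
          ring
        push_cast
        linear_combination hcc
      · intro m
        match m with
        | 0 => rw [hτ0]; omega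
        | 1 => rw [hτ1]; omega
        | 2 => rw [hτ2]; omega
        | (m + 3) => rw [hτ3 (m + 3) (by omega)]
end

section
/- Let 0 < |q| < 1 and let ξ be the GNS vector of the Haar state φ of SU_q(2). Then ‖(w* - a*)ξ‖ ≤ 3q², where the norm squared equals φ((w-a)(w-a)*). -/
open scoped InnerProductSpace
open ContinuousLinearMap

set_option maxHeartbeats 1600000 in
theorem stmt_14 (q : ℝ) (h0 : 0 < |q|) (h1 : |q| < 1)
    {H : Type*} [NormedAddCommGroup H] [InnerProductSpace ℂ H] [CompleteSpace H]
    (ξ : HilbertBasis (ℕ × ℤ) ℂ H)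
    (τ : ℕ → ℕ)
    (hτ : τ 0 = 2 ∧ τ 1 = 0 ∧ τ 2 = 1 ∧ ∀ n, 3 ≤ n → τ n = n)
    (a w : H →L[ℂ] H)
    (ha0 : ∀ k : ℤ, a (ξ (0, k)) = 0)
    (ha : ∀ (n : ℕ) (k : ℤ),
      a (ξ (n + 1, k)) = (Real.sqrt (1 - q ^ (2 * (n + 1))) : ℂ) • ξ (n, k))
    (hw : ∀ (n : ℕ) (k : ℤ), w (ξ (n, k)) = ξ (τ n, k))
    (φ : (H →L[ℂ] H) → ℝ)
    (hφ : ∀ x : H →L[ℂ] H,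
      φ x = (1 - q ^ 2) *
        ∑' n : ℕ, q ^ (2 * n) * (⟪x (ξ (n, 0)), ξ (n, 0)⟫_ℂ).re) :
    Real.sqrt (φ ((w - a) ∘L adjoint (w - a))) ≤ 3 * q ^ 2 := by
  obtain ⟨ht0, ht1, ht2, ht3⟩ := hτ
  have hq2 : q ^ 2 < 1 := by
    have h := sq_abs q
    nlinarith [abs_nonneg q]
  have hq2nn : (0:ℝ) ≤ q ^ 2 := sq_nonneg q
  have hq4 : q ^ 4 ≤ 1 := by
    calc q ^ 4 = (q ^ 2) ^ 2 := by ring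
    _ ≤ 1 ^ 2 := pow_le_pow_left₀ hq2nn hq2.le 2
    _ = 1 := one_pow 2
  have horm := orthonormal_iff_ite.mp ξ.orthonormal
  set B := w - a with hBdef
  have hpow : ∀ m : ℕ, q ^ (2 * m) ≤ 1 := by
    intro m
    calc q ^ (2 * m) = (q ^ 2) ^ m := by rw [pow_mul]
    _ ≤ 1 := pow_le_one₀ hq2nn hq2.le
  have hpownn : ∀ m : ℕ, (0:ℝ) ≤ q ^ (2 * m) := by
    intro m
    rw [pow_mul]; positivity
  -- value of τ
  have hτval : ∀ m : ℕ, τ m = if m = 0 then 2 else if m = 1 then 0 else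
      if m = 2 then 1 else m := by
    intro m
    by_cases e0 : m = 0
    · subst e0; simpa using ht0
    by_cases e1 : m = 1
    · subst e1; simpa using ht1
    by_cases e2 : m = 2
    · subst e2; simpa using ht2
    rw [ht3 m (by omega)]
    simp [e0, e1, e2]
  -- unified inner product formula
  have hc : ∀ (n m : ℕ) (k : ℤ), ⟪ξ (n, (0:ℤ)), B (ξ (m, k))⟫_ℂ
      = (if ((n : ℕ), (0:ℤ)) = (τ m, k) then 1 else 0)
        - (Real.sqrt (1 - q ^ (2 * m)) : ℂ)
            * (if ((n : ℕ), (0:ℤ)) = (m - 1, k) then 1 else 0) := by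
    intro n m k
    rcases m with _ | m
    · rw [hBdef, ContinuousLinearMap.sub_apply, inner_sub_right, hw, ha0,
        inner_zero_right, sub_zero, horm]
      norm_num
    · rw [hBdef, ContinuousLinearMap.sub_apply, inner_sub_right, hw, ha,
        inner_smul_right, horm, horm]
      norm_num
  -- generic vanishing lemma
  have hvan : ∀ (n₀ m : ℕ) (k : ℤ), ¬(τ m = n₀ ∧ k = 0) → ¬(m = n₀ + 1 ∧ k = 0) →
      ‖⟪ξ (n₀, (0:ℤ)), B (ξ (m, k))⟫_ℂ‖ ^ 2 = 0 := by
    intro n₀ m k hA hB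
    rw [hc]
    have e1 : (if ((n₀ : ℕ), (0:ℤ)) = (τ m, k) then (1:ℂ) else 0) = 0 := by
      rw [if_neg]
      intro h
      rw [Prod.mk.injEq] at h
      exact hA ⟨h.1.symm, h.2.symm⟩
    rw [e1]
    by_cases hm : m = 0
    · subst hm
      norm_num
    · have e2 : (if ((n₀ : ℕ), (0:ℤ)) = (m - 1, k) then (1:ℂ) else 0) = 0 := by
        rw [if_neg]
        intro h
        rw [Prod.mk.injEq] at h
        exact hB ⟨by omega, h.2.symm⟩
      rw [e2]
      simp
  -- HasSum identity
  have hrRaw : ∀ n : ℕ, HasSum (fun i : ℕ × ℤ => ‖⟪ξ (n, (0:ℤ)), B (ξ i)⟫_ℂ‖ ^ 2)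
      ((⟪(B ∘L adjoint B) (ξ (n, 0)), ξ (n, 0)⟫_ℂ).re) := by
    intro n
    have h1 : ⟪(B ∘L adjoint B) (ξ (n, 0)), ξ (n, 0)⟫_ℂ
        = ⟪adjoint B (ξ (n, 0)), adjoint B (ξ (n, 0))⟫_ℂ := by
      rw [ContinuousLinearMap.comp_apply, ← ContinuousLinearMap.adjoint_inner_right]
    have h2 := ξ.hasSum_inner_mul_inner (adjoint B (ξ (n, 0))) (adjoint B (ξ (n, 0)))
    have h3 : ∀ i : ℕ × ℤ,
        ⟪adjoint B (ξ (n, 0)), ξ i⟫_ℂ * ⟪ξ i, adjoint B (ξ (n, 0))⟫_ℂ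
        = ((‖⟪ξ (n, (0:ℤ)), B (ξ i)⟫_ℂ‖ ^ 2 : ℝ) : ℂ) := by
      intro i
      rw [← inner_conj_symm (ξ i) (adjoint B (ξ (n, 0))),
        ContinuousLinearMap.adjoint_inner_left, Complex.mul_conj']
      push_cast
      ring
    simp_rw [h3] at h2
    rw [h1]
    have h4 := h2.mapL Complex.reCLM
    simpa only [Complex.reCLM_apply, Complex.ofReal_re] using h4
  obtain ⟨r, hrdef⟩ : ∃ r : ℕ → ℝ, ∀ n : ℕ,
      r n = (⟪(B ∘L adjoint B) (ξ (n, 0)), ξ (n, 0)⟫_ℂ).re := ⟨_, fun _ => rfl⟩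
  have hr : ∀ n : ℕ, HasSum (fun i : ℕ × ℤ => ‖⟪ξ (n, (0:ℤ)), B (ξ i)⟫_ℂ‖ ^ 2) (r n) := by
    intro n
    rw [hrdef]
    exact hrRaw n
  have hrnn : ∀ n, 0 ≤ r n := by
    intro n
    exact (hr n).nonneg (fun i => by positivity)
  -- sqrt lemma
  have hs : ∀ x : ℝ, 0 ≤ x → x ≤ 1 → (1 - Real.sqrt (1 - x)) ^ 2 ≤ x ^ 2 := by
    intro x hx hx1
    have h1 : Real.sqrt (1 - x) ^ 2 = 1 - x := Real.sq_sqrt (by linarith)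
    have h2 : 0 ≤ Real.sqrt (1 - x) := Real.sqrt_nonneg _
    have h3 : Real.sqrt (1 - x) ≤ 1 := by nlinarith
    have h4 : 1 - Real.sqrt (1 - x) ≤ x := by nlinarith
    nlinarith
  -- r 0 ≤ q⁴
  have hb0 : r 0 ≤ q ^ 4 := by
    have hv : ∀ i : ℕ × ℤ, i ∉ ({((1:ℕ), (0:ℤ))} : Finset (ℕ × ℤ)) →
        ‖⟪ξ ((0:ℕ), (0:ℤ)), B (ξ i)⟫_ℂ‖ ^ 2 = 0 := by
      rintro ⟨m, k⟩ hi
      refine hvan 0 m k ?_ ?_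
      · rintro ⟨h1, rfl⟩
        rw [hτval] at h1
        have hm : m = 1 := by split_ifs at h1 <;> omega
        subst hm
        simp at hi
      · rintro ⟨rfl, rfl⟩
        simp at hi
    have heq : r 0 = ∑ i ∈ ({((1:ℕ), (0:ℤ))} : Finset (ℕ × ℤ)),
        ‖⟪ξ ((0:ℕ), (0:ℤ)), B (ξ i)⟫_ℂ‖ ^ 2 :=
      (hr 0).unique (hasSum_sum_of_ne_finset_zero hv)
    rw [heq, Finset.sum_singleton, hc 0 1 0, ht1]
    norm_num
    rw [show ((1:ℂ) - ((Real.sqrt (1 - q ^ 2) : ℝ) : ℂ))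
        = ((1 - Real.sqrt (1 - q ^ 2) : ℝ) : ℂ) from by push_cast; ring,
      Complex.norm_real, Real.norm_eq_abs, sq_abs]
    calc (1 - Real.sqrt (1 - q ^ 2)) ^ 2 ≤ (q ^ 2) ^ 2 := hs _ hq2nn hq2.le
    _ = q ^ 4 := by ring
  -- r 1 ≤ q⁴
  have hb1 : r 1 ≤ q ^ 4 := by
    have hv : ∀ i : ℕ × ℤ, i ∉ ({((2:ℕ), (0:ℤ))} : Finset (ℕ × ℤ)) →
        ‖⟪ξ ((1:ℕ), (0:ℤ)), B (ξ i)⟫_ℂ‖ ^ 2 = 0 := by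
      rintro ⟨m, k⟩ hi
      refine hvan 1 m k ?_ ?_
      · rintro ⟨h1, rfl⟩
        rw [hτval] at h1
        have hm : m = 2 := by split_ifs at h1 <;> omega
        subst hm
        simp at hi
      · rintro ⟨rfl, rfl⟩
        simp at hi
    have heq : r 1 = ∑ i ∈ ({((2:ℕ), (0:ℤ))} : Finset (ℕ × ℤ)),
        ‖⟪ξ ((1:ℕ), (0:ℤ)), B (ξ i)⟫_ℂ‖ ^ 2 :=
      (hr 1).unique (hasSum_sum_of_ne_finset_zero hv)
    rw [heq, Finset.sum_singleton, hc 1 2 0, ht2]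
    norm_num
    rw [show ((1:ℂ) - ((Real.sqrt (1 - q ^ 4) : ℝ) : ℂ))
        = ((1 - Real.sqrt (1 - q ^ 4) : ℝ) : ℂ) from by push_cast; ring,
      Complex.norm_real, Real.norm_eq_abs, sq_abs]
    have h4le : q ^ 4 ≤ 1 := hq4
    have h4nn : (0:ℝ) ≤ q ^ 4 := by positivity
    calc (1 - Real.sqrt (1 - q ^ 4)) ^ 2 ≤ (q ^ 4) ^ 2 := hs _ h4nn h4le
    _ ≤ q ^ 4 := by nlinarith
  -- bound for sqrt-squared terms
  have hsq1 : ∀ m : ℕ, (Real.sqrt (1 - q ^ (2 * m))) ^ 2 ≤ 1 := by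
    intro m
    rw [Real.sq_sqrt (by linarith [hpow m])]
    linarith [hpownn m]
  -- r (n+2) ≤ 2
  have hb2 : ∀ n : ℕ, r (n + 2) ≤ 2 := by
    intro n
    rcases n with _ | n
    · show r 2 ≤ 2
      have hv : ∀ i : ℕ × ℤ,
          i ∉ ({((0:ℕ), (0:ℤ)), ((3:ℕ), (0:ℤ))} : Finset (ℕ × ℤ)) →
          ‖⟪ξ ((2:ℕ), (0:ℤ)), B (ξ i)⟫_ℂ‖ ^ 2 = 0 := by
        rintro ⟨m, k⟩ hi
        refine hvan 2 m k ?_ ?_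
        · rintro ⟨h1, rfl⟩
          rw [hτval] at h1
          have hm : m = 0 := by split_ifs at h1 <;> omega
          subst hm
          simp at hi
        · rintro ⟨rfl, rfl⟩
          simp at hi
      have heq : r 2 = ∑ i ∈ ({((0:ℕ), (0:ℤ)), ((3:ℕ), (0:ℤ))} : Finset (ℕ × ℤ)),
          ‖⟪ξ ((2:ℕ), (0:ℤ)), B (ξ i)⟫_ℂ‖ ^ 2 :=
        (hr 2).unique (hasSum_sum_of_ne_finset_zero hv)
      have hterm1 : ‖⟪ξ ((2:ℕ), (0:ℤ)), B (ξ ((0:ℕ), (0:ℤ)))⟫_ℂ‖ ^ 2 = 1 := by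
        rw [hc 2 0 0, ht0]
        norm_num
      have hterm2 : ‖⟪ξ ((2:ℕ), (0:ℤ)), B (ξ ((3:ℕ), (0:ℤ)))⟫_ℂ‖ ^ 2
          = Real.sqrt (1 - q ^ 6) ^ 2 := by
        rw [hc 2 3 0, ht3 3 (by omega)]
        norm_num
      have hsq6 : Real.sqrt (1 - q ^ 6) ^ 2 ≤ 1 := by
        have h6 : q ^ 6 ≤ 1 := by
          have := hpow 3
          norm_num at this
          exact this
        have h6nn : (0:ℝ) ≤ q ^ 6 := by positivity
        rw [Real.sq_sqrt (by linarith)]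
        linarith
      rw [heq, Finset.sum_insert (by decide), Finset.sum_singleton, hterm1, hterm2]
      linarith [hsq6]
    · show r (n + 3) ≤ 2
      have hv : ∀ i : ℕ × ℤ,
          i ∉ ({((n + 3 : ℕ), (0:ℤ)), ((n + 4 : ℕ), (0:ℤ))} : Finset (ℕ × ℤ)) →
          ‖⟪ξ ((n + 3 : ℕ), (0:ℤ)), B (ξ i)⟫_ℂ‖ ^ 2 = 0 := by
        rintro ⟨m, k⟩ hi
        refine hvan (n + 3) m k ?_ ?_
        · rintro ⟨h1, rfl⟩
          rw [hτval] at h1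
          have hm : m = n + 3 := by split_ifs at h1 <;> omega
          subst hm
          exact hi (Finset.mem_insert.mpr (Or.inl rfl))
        · rintro ⟨rfl, rfl⟩
          refine hi (Finset.mem_insert.mpr (Or.inr (Finset.mem_singleton.mpr ?_)))
          rw [Prod.mk.injEq]
          exact ⟨by omega, rfl⟩
      have heq : r (n + 3) = ∑ i ∈
          ({((n + 3 : ℕ), (0:ℤ)), ((n + 4 : ℕ), (0:ℤ))} : Finset (ℕ × ℤ)),
          ‖⟪ξ ((n + 3 : ℕ), (0:ℤ)), B (ξ i)⟫_ℂ‖ ^ 2 :=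
        (hr (n + 3)).unique (hasSum_sum_of_ne_finset_zero (by
          simpa using hv))
      have hne : ((n + 3 : ℕ), (0:ℤ)) ≠ ((n + 4 : ℕ), (0:ℤ)) := by
        rw [Ne, Prod.mk.injEq]
        rintro ⟨h', -⟩
        omega
      have hterm1 : ‖⟪ξ ((n + 3 : ℕ), (0:ℤ)), B (ξ ((n + 3 : ℕ), (0:ℤ)))⟫_ℂ‖ ^ 2 = 1 := by
        rw [hc (n + 3) (n + 3) 0, ht3 (n + 3) (by omega),
          if_pos rfl,
          if_neg (show ¬ ((n + 3 : ℕ), (0:ℤ)) = ((n + 3 - 1 : ℕ), (0:ℤ)) by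
            rw [Prod.mk.injEq]; rintro ⟨h', -⟩; omega)]
        norm_num
      have hterm2 : ‖⟪ξ ((n + 3 : ℕ), (0:ℤ)), B (ξ ((n + 4 : ℕ), (0:ℤ)))⟫_ℂ‖ ^ 2
          = Real.sqrt (1 - q ^ (2 * (n + 4))) ^ 2 := by
        rw [hc (n + 3) (n + 4) 0, ht3 (n + 4) (by omega),
          if_neg (show ¬ ((n + 3 : ℕ), (0:ℤ)) = ((n + 4 : ℕ), (0:ℤ)) from hne),
          if_pos (show ((n + 3 : ℕ), (0:ℤ)) = ((n + 4 - 1 : ℕ), (0:ℤ)) by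
            rw [Prod.mk.injEq]; exact ⟨by omega, rfl⟩)]
        norm_num [Complex.norm_real, sq_abs]
      rw [heq, Finset.sum_insert (by simpa using hne), Finset.sum_singleton,
        hterm1, hterm2]
      linarith [hsq1 (n + 4)]
  -- summability
  have hf : ∀ n : ℕ, q ^ (2 * n) * r n ≤ 2 * (q ^ 2) ^ n := by
    intro n
    have h2 : r n ≤ 2 := by
      rcases n with _ | _ | n
      · exact le_trans hb0 (by linarith)
      · exact le_trans hb1 (by linarith)
      · exact hb2 n
    calc q ^ (2 * n) * r n ≤ q ^ (2 * n) * 2 :=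
      mul_le_mul_of_nonneg_left h2 (hpownn n)
    _ = 2 * (q ^ 2) ^ n := by rw [pow_mul]; ring
  have hgsum : Summable (fun n : ℕ => 2 * (q ^ 2) ^ n) :=
    (summable_geometric_of_lt_one hq2nn hq2).mul_left 2
  have hfnn : ∀ n : ℕ, 0 ≤ q ^ (2 * n) * r n := fun n =>
    mul_nonneg (hpownn n) (hrnn n)
  have hfs : Summable (fun n : ℕ => q ^ (2 * n) * r n) :=
    Summable.of_nonneg_of_le hfnn hf hgsum
  -- tail bound
  have htail : ∑' n : ℕ, q ^ (2 * (n + 1 + 1)) * r (n + 1 + 1)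
      ≤ 2 * q ^ 4 * (1 - q ^ 2)⁻¹ := by
    have hmaj : ∀ n : ℕ, q ^ (2 * (n + 1 + 1)) * r (n + 1 + 1)
        ≤ 2 * q ^ 4 * (q ^ 2) ^ n := by
      intro n
      calc q ^ (2 * (n + 1 + 1)) * r (n + 1 + 1) ≤ 2 * (q ^ 2) ^ (n + 2) := hf (n + 2)
      _ = 2 * q ^ 4 * (q ^ 2) ^ n := by ring
    have hsum : HasSum (fun n : ℕ => 2 * q ^ 4 * (q ^ 2) ^ n)
        (2 * q ^ 4 * (1 - q ^ 2)⁻¹) :=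
      (hasSum_geometric_of_lt_one hq2nn hq2).mul_left _
    have hsum2 : Summable (fun n : ℕ => q ^ (2 * (n + 1 + 1)) * r (n + 1 + 1)) :=
      Summable.of_nonneg_of_le (fun n => hfnn (n + 2)) hmaj hsum.summable
    have h1 := Summable.tsum_le_tsum hmaj hsum2 hsum.summable
    rwa [hsum.tsum_eq] at h1
  -- total bound
  have hfs1 : Summable (fun n : ℕ => q ^ (2 * (n + 1)) * r (n + 1)) := by
    refine Summable.of_nonneg_of_le (fun n => hfnn (n + 1)) (fun n => ?_)
      ((summable_geometric_of_lt_one hq2nn hq2).mul_left (2 * q ^ 2))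
    calc q ^ (2 * (n + 1)) * r (n + 1) ≤ 2 * (q ^ 2) ^ (n + 1) := hf (n + 1)
    _ = 2 * q ^ 2 * (q ^ 2) ^ n := by ring
  have e0 : q ^ (2 * 0) * r 0 ≤ q ^ 4 := by
    norm_num
    exact hb0
  have e1 : q ^ (2 * (0 + 1)) * r (0 + 1) ≤ q ^ 4 := by
    have he : q ^ (2 * (0 + 1)) * r (0 + 1) = q ^ 2 * r 1 := by norm_num
    rw [he]
    calc q ^ 2 * r 1 ≤ 1 * r 1 := mul_le_mul_of_nonneg_right hq2.le (hrnn 1)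
    _ = r 1 := by ring
    _ ≤ q ^ 4 := hb1
  have hT : ∑' n : ℕ, q ^ (2 * n) * r n
      ≤ 2 * q ^ 4 + 2 * q ^ 4 * (1 - q ^ 2)⁻¹ := by
    calc ∑' n : ℕ, q ^ (2 * n) * r n
        = q ^ (2 * 0) * r 0 + ∑' n : ℕ, q ^ (2 * (n + 1)) * r (n + 1) :=
          Summable.tsum_eq_zero_add hfs
    _ = q ^ (2 * 0) * r 0 + (q ^ (2 * (0 + 1)) * r (0 + 1)
          + ∑' n : ℕ, q ^ (2 * (n + 1 + 1)) * r (n + 1 + 1)) :=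
          congrArg (q ^ (2 * 0) * r 0 + ·) (Summable.tsum_eq_zero_add hfs1)
    _ ≤ q ^ 4 + (q ^ 4 + 2 * q ^ 4 * (1 - q ^ 2)⁻¹) :=
          add_le_add e0 (add_le_add e1 htail)
    _ = 2 * q ^ 4 + 2 * q ^ 4 * (1 - q ^ 2)⁻¹ := by ring
  -- conclude
  have hφval : φ (B ∘L adjoint B) = (1 - q ^ 2) * ∑' n : ℕ, q ^ (2 * n) * r n := by
    rw [hφ]
    congr 1
    exact tsum_congr fun n => by rw [hrdef]
  have h9 : φ (B ∘L adjoint B) ≤ (3 * q ^ 2) ^ 2 := by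
    rw [hφval]
    have h1q : (0:ℝ) < 1 - q ^ 2 := by linarith
    have hmul := mul_le_mul_of_nonneg_left hT h1q.le
    have hne : (1 - q ^ 2) ≠ 0 := by linarith
    have hsimp : (1 - q ^ 2) * (2 * q ^ 4 + 2 * q ^ 4 * (1 - q ^ 2)⁻¹)
        = (1 - q ^ 2) * (2 * q ^ 4) + 2 * q ^ 4 := by
      field_simp
    rw [hsimp] at hmul
    nlinarith [sq_nonneg q, sq_nonneg (q ^ 2), hq2nn]
  calc Real.sqrt (φ (B ∘L adjoint B)) ≤ Real.sqrt ((3 * q ^ 2) ^ 2) :=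
    Real.sqrt_le_sqrt h9
  _ = 3 * q ^ 2 := Real.sqrt_sq (by positivity)
end
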